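/- A set A ⊆ ℝ^d is Lebesgue measurable if and only if its indicator function is quasicontinuous: for A ⊆ ℝ^d, A is null-measurable with respect to the Lebesgue measure λ (i.e. A differs from a Borel set by a λ-null set) if and only if the indicator function 𝟙_A : ℝ^d → ℝ is quasicontinuous. -/

import Mathlib

open MeasureTheory

/-- Tonelli's notion of quasicontinuity: for every `ε > 0` there is an open set of
Lebesgue measure less than `ε` off which the function is continuous. -/
def Quasicontinuous {d : ℕ} (f : (Fin d → ℝ) → ℝ) : Prop :=
  ∀ ε : ℝ, 0 < ε → ∃ O : Set (Fin d → ℝ), IsOpen O ∧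
    volume O < ENNReal.ofReal ε ∧ ContinuousOn f Oᶜ

/-- Inner approximation of an arbitrary measurable set in `ℝ^d` by closed sets,
also for sets of infinite measure (σ-finite argument using spherical shells). -/
lemma exists_isClosed_diff_lt_of_measurable {d : ℕ} {B : Set (Fin d → ℝ)}
    (hB : MeasurableSet B) {ε : ENNReal} (hε : ε ≠ 0) :
    ∃ F, F ⊆ B ∧ IsClosed F ∧ volume (B \ F) < ε := by
  obtain ⟨δ, δpos, hδ⟩ := ENNReal.exists_pos_sum_of_countable hε ℕ
  set S : ℕ → Set (Fin d → ℝ) :=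
    fun n => Metric.closedBall 0 (n + 1) \ Metric.ball 0 n with hS
  have hSm : ∀ n, MeasurableSet (B ∩ S n) := fun n =>
    hB.inter ((Metric.isClosed_closedBall.measurableSet).diff Metric.isOpen_ball.measurableSet)
  have hSfin : ∀ n, volume (B ∩ S n) ≠ ⊤ := by
    intro n
    refine ne_top_of_le_ne_top ?_ (measure_mono ((Set.inter_subset_right).trans
      Set.diff_subset))
    exact (isCompact_closedBall _ _).measure_lt_top.ne
  choose F hFsub hFcl hFlt using fun n =>
    (hSm n).exists_isClosed_diff_lt (hSfin n)
      (ε := (δ n : ENNReal)) (by exact_mod_cast (δpos n).ne')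
  have hFS : ∀ n, F n ⊆ S n := fun n => (hFsub n).trans Set.inter_subset_right
  have hloc : LocallyFinite F := by
    intro x
    refine ⟨Metric.ball 0 (‖x‖ + 1), Metric.isOpen_ball.mem_nhds ?_, ?_⟩
    · rw [Metric.mem_ball, dist_zero_right]; linarith
    · apply Set.Finite.subset (Set.finite_Iio (⌈‖x‖ + 1⌉₊))
      intro n hn
      obtain ⟨y, hyF, hy⟩ := hn
      have h1 : (n : ℝ) ≤ ‖y‖ := by
        have := (hFS n hyF).2
        simpa [Metric.mem_ball, dist_zero_right, not_lt] using this
      have h2 : ‖y‖ < ‖x‖ + 1 := by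
        rwa [Metric.mem_ball, dist_zero_right] at hy
      exact Set.mem_Iio.2 (Nat.lt_ceil.2 (h1.trans_lt h2))
  refine ⟨⋃ n, F n, Set.iUnion_subset fun n => (hFsub n).trans Set.inter_subset_left,
    hloc.isClosed_iUnion hFcl, ?_⟩
  have hcover : B \ ⋃ n, F n ⊆ ⋃ n, (B ∩ S n) \ F n := by
    intro x ⟨hxB, hxF⟩
    have hxS : x ∈ S ⌊‖x‖⌋₊ := by
      constructor
      · rw [Metric.mem_closedBall, dist_zero_right]
        exact le_of_lt (by exact_mod_cast Nat.lt_floor_add_one ‖x‖)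
      · rw [Metric.mem_ball, dist_zero_right, not_lt]
        exact Nat.floor_le (norm_nonneg x)
    exact Set.mem_iUnion.2 ⟨⌊‖x‖⌋₊, ⟨hxB, hxS⟩, fun h => hxF (Set.mem_iUnion.2 ⟨_, h⟩)⟩
  calc volume (B \ ⋃ n, F n) ≤ ∑' n, volume ((B ∩ S n) \ F n) :=
        (measure_mono hcover).trans (measure_iUnion_le _)
    _ ≤ ∑' n, (δ n : ENNReal) := ENNReal.tsum_le_tsum fun n => (hFlt n).le
    _ < ε := hδ

/-- The indicator of `A` is continuous on the union of two disjoint closed sets,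
one inside `A` and one inside `Aᶜ`. -/
lemma continuousOn_indicator_union {X : Type*} [TopologicalSpace X]
    {A C₁ C₂ : Set X} (h₁ : IsClosed C₁) (h₂ : IsClosed C₂)
    (hA₁ : C₁ ⊆ A) (hA₂ : C₂ ⊆ Aᶜ) :
    ContinuousOn (A.indicator fun _ => (1 : ℝ)) (C₁ ∪ C₂) := by
  intro x hx
  rcases hx with hx | hx
  · refine (continuousWithinAt_const (b := (1 : ℝ))).congr_of_eventuallyEq ?_ ?_
    · have hmem : C₂ᶜ ∈ nhdsWithin x (C₁ ∪ C₂) :=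
        mem_nhdsWithin_of_mem_nhds (h₂.isOpen_compl.mem_nhds (fun h => hA₂ h (hA₁ hx)))
      filter_upwards [hmem, self_mem_nhdsWithin] with y hy hy'
      have : y ∈ A := hA₁ (hy'.resolve_right hy)
      simp [Set.indicator_of_mem this]
    · simp [Set.indicator_of_mem (hA₁ hx)]
  · refine (continuousWithinAt_const (b := (0 : ℝ))).congr_of_eventuallyEq ?_ ?_
    · have hmem : C₁ᶜ ∈ nhdsWithin x (C₁ ∪ C₂) :=
        mem_nhdsWithin_of_mem_nhds (h₁.isOpen_compl.mem_nhds (fun h => hA₂ hx (hA₁ h)))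
      filter_upwards [hmem, self_mem_nhdsWithin] with y hy hy'
      have : y ∉ A := fun hyA => hA₂ (hy'.resolve_left hy) hyA
      simp [Set.indicator_of_notMem this]
    · simp [Set.indicator_of_notMem (hA₂ hx ·)]

/-- A set is Lebesgue measurable if and only if its indicator function is
quasicontinuous. -/
theorem nullMeasurableSet_iff_quasicontinuous_indicator
    (d : ℕ) (A : Set (Fin d → ℝ)) :
    NullMeasurableSet A (volume : Measure (Fin d → ℝ)) ↔
      Quasicontinuous (Set.indicator A (fun _ => (1 : ℝ))) := by
  constructor
  · -- Forward direction.
    intro hA ε hε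
    obtain ⟨B, hBm, hAB⟩ := hA
    -- `D` is the symmetric difference, a null set.
    set D : Set (Fin d → ℝ) := (A \ B) ∪ (B \ A) with hD
    have hDnull : volume D = 0 := by
      rw [MeasureTheory.ae_eq_set] at hAB
      exact le_antisymm ((measure_union_le _ _).trans (by rw [hAB.1, hAB.2]; simp)) bot_le
    obtain ⟨V, hDV, hVopen, hVlt⟩ := Set.exists_isOpen_lt_of_lt D (ENNReal.ofReal (ε / 2))
      (by rw [hDnull]; exact ENNReal.ofReal_pos.2 (by linarith))
    obtain ⟨F₁, hF₁B, hF₁cl, hF₁lt⟩ := exists_isClosed_diff_lt_of_measurable hBm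
      (ε := ENNReal.ofReal (ε / 4)) (ENNReal.ofReal_pos.2 (by linarith)).ne'
    obtain ⟨F₂, hF₂B, hF₂cl, hF₂lt⟩ := exists_isClosed_diff_lt_of_measurable hBm.compl
      (ε := ENNReal.ofReal (ε / 4)) (ENNReal.ofReal_pos.2 (by linarith)).ne'
    refine ⟨V ∪ (F₁ ∪ F₂)ᶜ, hVopen.union (hF₁cl.union hF₂cl).isOpen_compl, ?_, ?_⟩
    · have hsub : (F₁ ∪ F₂)ᶜ ⊆ (B \ F₁) ∪ (Bᶜ \ F₂) := by
        intro x hx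
        rw [Set.mem_compl_iff, Set.mem_union, not_or] at hx
        by_cases hxB : x ∈ B
        · exact Or.inl ⟨hxB, hx.1⟩
        · exact Or.inr ⟨hxB, hx.2⟩
      calc volume (V ∪ (F₁ ∪ F₂)ᶜ) ≤ volume V + volume ((F₁ ∪ F₂)ᶜ) := measure_union_le _ _
        _ ≤ volume V + (volume (B \ F₁) + volume (Bᶜ \ F₂)) :=
            add_le_add_right ((measure_mono hsub).trans (measure_union_le _ _)) _
        _ < ENNReal.ofReal (ε / 2) + (ENNReal.ofReal (ε / 4) + ENNReal.ofReal (ε / 4)) := by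
            apply ENNReal.add_lt_add hVlt
            exact ENNReal.add_lt_add hF₁lt hF₂lt
        _ = ENNReal.ofReal ε := by
            rw [← ENNReal.ofReal_add (by linarith) (by linarith),
              ← ENNReal.ofReal_add (by linarith) (by linarith)]
            ring_nf
    · have hset : (V ∪ (F₁ ∪ F₂)ᶜ)ᶜ = (Vᶜ ∩ F₁) ∪ (Vᶜ ∩ F₂) := by
        rw [Set.compl_union, compl_compl, Set.inter_union_distrib_left]
      rw [hset]
      apply continuousOn_indicator_union (hVopen.isClosed_compl.inter hF₁cl)
        (hVopen.isClosed_compl.inter hF₂cl)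
      · -- `Vᶜ ∩ F₁ ⊆ A`
        rintro x ⟨hxV, hxF⟩
        by_contra hxA
        exact hxV (hDV (Or.inr ⟨hF₁B hxF, hxA⟩))
      · -- `Vᶜ ∩ F₂ ⊆ Aᶜ`
        rintro x ⟨hxV, hxF⟩ hxA
        exact hxV (hDV (Or.inl ⟨hxA, hF₂B hxF⟩))
  · -- Converse direction.
    intro h
    choose O hOopen hOvol hOcont using fun n : ℕ =>
      h (1 / (n + 1)) (by positivity)
    have hA_eq : ∀ n, (O n)ᶜ ∩ A = (O n)ᶜ ∩ (A.indicator fun _ => (1 : ℝ)) ⁻¹' {1} := by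
      intro n
      ext x
      simp only [Set.mem_inter_iff, Set.mem_preimage, Set.mem_singleton_iff]
      refine and_congr_right fun _ => ?_
      by_cases hx : x ∈ A <;> simp [Set.indicator_of_mem, Set.indicator_of_notMem, hx]
    have hclosed : ∀ n, IsClosed ((O n)ᶜ ∩ A) := by
      intro n
      rw [hA_eq n]
      exact (hOcont n).preimage_isClosed_of_isClosed (hOopen n).isClosed_compl
        isClosed_singleton
    have hNnull : volume (⋂ n, O n) = 0 := by
      have htend : Filter.Tendsto (fun n : ℕ => ENNReal.ofReal (1 / (n + 1)))
          Filter.atTop (nhds 0) := by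
        rw [← ENNReal.ofReal_zero]
        exact (ENNReal.continuous_ofReal.tendsto 0).comp
          tendsto_one_div_add_atTop_nhds_zero_nat
      refine le_antisymm (ge_of_tendsto' htend fun n => ?_) bot_le
      exact le_of_lt ((measure_mono (Set.iInter_subset O n)).trans_lt (hOvol n))
    have hAdecomp : A = (⋃ n, (O n)ᶜ ∩ A) ∪ (A ∩ ⋂ n, O n) := by
      ext x
      constructor
      · intro hx
        by_cases hall : ∀ n, x ∈ O n
        · exact Or.inr ⟨hx, Set.mem_iInter.2 hall⟩
        · obtain ⟨n, hn⟩ := not_forall.1 hall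
          exact Or.inl (Set.mem_iUnion.2 ⟨n, hn, hx⟩)
      · rintro (hx | hx)
        · obtain ⟨n, _, hxA⟩ := Set.mem_iUnion.1 hx
          exact hxA
        · exact hx.1
    rw [hAdecomp]
    refine NullMeasurableSet.union ?_ ?_
    · exact (MeasurableSet.iUnion fun n => (hclosed n).measurableSet).nullMeasurableSet
    · exact (NullMeasurableSet.of_null
        (measure_mono_null Set.inter_subset_right hNnull))
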